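/- Let 0 < q < 1, w ≥ 1, m ∈ ℕ, and x₁,…,x_w ∈ ℝ. Then ( ∏_{i=1}^{w} [x_i]_q )^m = Σ_{l₁=0}^{m} Σ_{l₂=0}^{m} ⋯ Σ_{l_w=0}^{m} q^{Σ_{i=1}^{w} C(l_i,2)} · ∏_{i=1}^{w} binom(x_i, l_i)_q · [l_i]_q! · S(m, l_i; q). -/

import Mathlib

open Finset

/-- The `q`-number `[x]_q = (1 - q^x)/(1 - q)` (real exponent). -/
noncomputable def qnum (q x : ℝ) : ℝ := (1 - q ^ x) / (1 - q)

/-- The `q`-factorial `[n]_q! = [1]_q [2]_q ⋯ [n]_q`. -/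
noncomputable def qfac (q : ℝ) (n : ℕ) : ℝ :=
  ∏ j ∈ Finset.range n, qnum q ((j : ℝ) + 1)

/-- The Gaussian binomial coefficient `binom(n,k)_q = [n]_q!/([k]_q!·[n−k]_q!)`. -/
noncomputable def qbinom (q : ℝ) (n k : ℕ) : ℝ :=
  qfac q n / (qfac q k * qfac q (n - k))

/-- The Gaussian binomial coefficient with real upper argument,
`binom(x,k)_q = ([x]_q [x−1]_q ⋯ [x−k+1]_q)/[k]_q!`. -/
noncomputable def qbinomR (q x : ℝ) (k : ℕ) : ℝ :=
  (∏ j ∈ Finset.range k, qnum q (x - (j : ℝ))) / qfac q k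

/-- The `q`-extension of the second kind Stirling numbers,
`S(n,k;q) = (q^{−C(k,2)}/[k]_q!) Σ_{i=0}^{k} (−1)^i q^{C(i,2)} binom(k,i)_q [k−i]_q^n`. -/
noncomputable def qStirling (q : ℝ) (n k : ℕ) : ℝ :=
  ((q ^ k.choose 2)⁻¹ / qfac q k) *
    ∑ i ∈ Finset.range (k + 1),
      (-1 : ℝ) ^ i * q ^ i.choose 2 * qbinom q k i * qnum q ((k - i : ℕ) : ℝ) ^ n

noncomputable def qnumN (q : ℝ) (n : ℕ) : ℝ := (1 - q ^ n) / (1 - q)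
lemma h1q {q : ℝ} (hq1 : q < 1) : (1:ℝ) - q ≠ 0 := by nlinarith
lemma qnum_natCast {q : ℝ} (n : ℕ) : qnum q (n : ℝ) = qnumN q n := by
  unfold qnum qnumN; rw [Real.rpow_natCast]
lemma qnum_zero {q : ℝ} : qnum q 0 = 0 := by
  unfold qnum; rw [Real.rpow_zero]; simp
lemma qnumN_zero {q : ℝ} : qnumN q 0 = 0 := by unfold qnumN; simp
lemma qnumN_pos {q : ℝ} (hq0 : 0 < q) (hq1 : q < 1) (n : ℕ) : 0 < qnumN q (n+1) := by
  unfold qnumN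
  have h1 : q ^ (n+1) < 1 := pow_lt_one₀ hq0.le hq1 (Nat.succ_ne_zero n)
  have h2 : 0 < 1 - q ^ (n+1) := by linarith
  have h3 : 0 < 1 - q := by linarith
  positivity
lemma qfac_pos {q : ℝ} (hq0 : 0 < q) (hq1 : q < 1) (n : ℕ) : 0 < qfac q n := by
  unfold qfac
  apply Finset.prod_pos
  intro j _
  have : ((j:ℝ) + 1) = ((j+1 : ℕ) : ℝ) := by push_cast; ring
  rw [this, qnum_natCast]
  exact qnumN_pos hq0 hq1 j
lemma qfac_ne {q : ℝ} (hq0 : 0 < q) (hq1 : q < 1) (n : ℕ) : qfac q n ≠ 0 :=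
  (qfac_pos hq0 hq1 n).ne'
lemma qfac_succ {q : ℝ} (n : ℕ) : qfac q (n+1) = qfac q n * qnumN q (n+1) := by
  unfold qfac
  rw [Finset.prod_range_succ]
  congr 1
  have : ((n:ℝ) + 1) = ((n+1 : ℕ) : ℝ) := by push_cast; ring
  rw [this, qnum_natCast]
lemma qnum_split {q : ℝ} (hq0 : 0 < q) (x : ℝ) (l : ℕ) :
    qnum q x = qnumN q l + q ^ l * qnum q (x - l) := by
  have key : (q:ℝ) ^ l * q ^ (x - (l:ℝ)) = q ^ x := by
    rw [← Real.rpow_natCast q l, ← Real.rpow_add hq0]; ring_nf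
  unfold qnum qnumN
  rw [← mul_div_assoc, ← add_div]
  rw [← key]; ring_nf
lemma prod_qnum_succ_left {q : ℝ} (x : ℝ) (i : ℕ) :
    (∏ j ∈ Finset.range (i+1), qnum q (x - (j:ℝ))) =
      (∏ j ∈ Finset.range i, qnum q (x - 1 - (j:ℝ))) * qnum q x := by
  rw [Finset.prod_range_succ']
  congr 1
  · apply Finset.prod_congr rfl; intro j _; congr 1; push_cast; ring
  · congr 1; push_cast; ring
lemma qbinomR_pascal {q : ℝ} (hq0 : 0 < q) (hq1 : q < 1) (x : ℝ) (i : ℕ) :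
    qbinomR q x (i+1) = qbinomR q (x-1) i + q^(i+1) * qbinomR q (x-1) (i+1) := by
  unfold qbinomR
  rw [prod_qnum_succ_left, Finset.prod_range_succ,
    qnum_split hq0 x (i+1), qfac_succ]
  have h1 : x - ((i:ℕ)+1 : ℕ) = x - 1 - (i:ℝ) := by push_cast; ring
  rw [h1]
  have h2 := (qnumN_pos hq0 hq1 i).ne'
  have h3 := qfac_ne hq0 hq1 i
  field_simp
lemma qfac_eq_prod {q : ℝ} (hq0 : 0 < q) (hq1 : q < 1) {i n : ℕ} (h : i ≤ n) :
    qfac q n = qfac q (n-i) * ∏ j ∈ Finset.range i, qnum q ((n:ℝ) - (j:ℝ)) := by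
  induction i with
  | zero => simp
  | succ i ih =>
    have hi : i ≤ n := Nat.le_of_succ_le h
    rw [Finset.prod_range_succ, ih hi]
    have hcast : (n:ℝ) - (i:ℝ) = ((n - i : ℕ) : ℝ) := by
      rw [Nat.cast_sub hi]
    rw [hcast, qnum_natCast]
    have h1 : n - i = (n - (i+1)) + 1 := by omega
    rw [h1, qfac_succ]
    rw [← h1]
    ring
lemma qbinom_eq_qbinomR {q : ℝ} (hq0 : 0 < q) (hq1 : q < 1) {i n : ℕ} (h : i ≤ n) :
    qfac q n / (qfac q i * qfac q (n-i)) = qbinomR q (n:ℝ) i := by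
  unfold qbinomR
  rw [qfac_eq_prod hq0 hq1 h]
  have h3 := qfac_ne hq0 hq1 i
  have h4 := qfac_ne hq0 hq1 (n-i)
  field_simp
lemma qbinomR_zero {q : ℝ} (x : ℝ) : qbinomR q x 0 = 1 := by
  simp [qbinomR, qfac]
lemma qbinomR_top_zero {q : ℝ} (K : ℕ) : qbinomR q (K:ℝ) (K+1) = 0 := by
  unfold qbinomR
  rw [Finset.prod_eq_zero (Finset.self_mem_range_succ K)]
  · simp
  · rw [sub_self, qnum_zero]
lemma gauss_sum {q : ℝ} (hq0 : 0 < q) (hq1 : q < 1) (K : ℕ) :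
    ∑ i ∈ Finset.range (K+2), (-1:ℝ)^i * q^(i.choose 2) * qbinom q (K+1) i = 0 := by
  have hconv : ∀ i ∈ Finset.range (K+2),
      (-1:ℝ)^i * q^(i.choose 2) * qbinom q (K+1) i
        = (-1:ℝ)^i * q^(i.choose 2) * qbinomR q ((K+1:ℕ):ℝ) i := by
    intro i hi
    rw [Finset.mem_range] at hi
    unfold qbinom
    rw [qbinom_eq_qbinomR hq0 hq1 (by omega : i ≤ K+1)]
  rw [Finset.sum_congr rfl hconv]
  set u : ℕ → ℝ := fun j => (-1:ℝ)^j * q^(j.choose 2 + j) * qbinomR q (K:ℝ) j with hu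
  have hstep : ∀ j, (-1:ℝ)^(j+1) * q^((j+1).choose 2) * qbinomR q ((K+1:ℕ):ℝ) (j+1)
      = u (j+1) - u j := by
    intro j
    have hp : qbinomR q ((K+1:ℕ):ℝ) (j+1)
        = qbinomR q (((K+1:ℕ):ℝ) - 1) j + q^(j+1) * qbinomR q (((K+1:ℕ):ℝ) - 1) (j+1) :=
      qbinomR_pascal hq0 hq1 _ j
    have hc : ((K+1:ℕ):ℝ) - 1 = (K:ℝ) := by push_cast; ring
    rw [hp, hc, hu]
    simp only []
    have hch : (j+1).choose 2 = j.choose 2 + j := by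
      rw [Nat.choose_succ_succ]
      simp [Nat.choose_one_right, Nat.add_comm]
    rw [hch]
    rw [pow_add, pow_add, pow_add, pow_succ]
    ring
  rw [Finset.sum_range_succ']
  have h0 : (-1:ℝ)^0 * q^(Nat.choose 0 2) * qbinomR q ((K+1:ℕ):ℝ) 0 = 1 := by
    simp [qbinomR_zero]
  rw [h0, Finset.sum_congr rfl (fun j _ => hstep j), Finset.sum_range_sub]
  have hu0 : u 0 = 1 := by simp [hu, qbinomR_zero]
  have huK : u (K+1) = 0 := by
    rw [hu]; simp only []
    rw [qbinomR_top_zero]; ring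
  rw [hu0, huK]; ring
noncomputable def Tq (q : ℝ) (n k : ℕ) : ℝ :=
  ∑ i ∈ Finset.range (k + 1),
    (-1 : ℝ) ^ i * q ^ i.choose 2 * qbinom q k i * qnumN q (k - i) ^ n
lemma qStirling_eq_T {q : ℝ} (n k : ℕ) :
    qStirling q n k = ((q ^ k.choose 2)⁻¹ / qfac q k) * Tq q n k := by
  unfold qStirling Tq
  congr 1
  apply Finset.sum_congr rfl
  intro i _
  rw [qnum_natCast]
lemma qnumN_sub {q : ℝ} (hq1 : q < 1) {i m : ℕ} (h : i ≤ m) :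
    qnumN q (m - i) = qnumN q m - q^(m-i) * qnumN q i := by
  have key : q^(m-i) * q^i = q^m := by rw [← pow_add]; congr 1; omega
  unfold qnumN
  field_simp
  linear_combination (-(1-q)⁻¹) * key
lemma qbinom_succ_mul {q : ℝ} (hq0 : 0 < q) (hq1 : q < 1) (k j : ℕ) :
    qbinom q (k+1) (j+1) * qnumN q (j+1) = qnumN q (k+1) * qbinom q k j := by
  unfold qbinom
  rw [Nat.succ_sub_succ]
  rw [qfac_succ k, qfac_succ j]
  have h1 := qfac_ne hq0 hq1 k
  have h2 := qfac_ne hq0 hq1 j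
  have h3 := qfac_ne hq0 hq1 (k - j)
  have h4 := (qnumN_pos hq0 hq1 j).ne'
  have h5 := (qnumN_pos hq0 hq1 k).ne'
  field_simp
lemma Tq_rec {q : ℝ} (hq0 : 0 < q) (hq1 : q < 1) (n k : ℕ) :
    Tq q (n+1) (k+1) = qnumN q (k+1) * Tq q n (k+1) + q^k * qnumN q (k+1) * Tq q n k := by
  unfold Tq
  have split : ∀ i ∈ Finset.range (k+2),
      (-1:ℝ)^i * q^(i.choose 2) * qbinom q (k+1) i * qnumN q (k+1-i) ^ (n+1)
      = qnumN q (k+1) * ((-1:ℝ)^i * q^(i.choose 2) * qbinom q (k+1) i * qnumN q (k+1-i) ^ n)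
        - (-1:ℝ)^i * q^(i.choose 2) * q^(k+1-i) * (qbinom q (k+1) i * qnumN q i)
            * qnumN q (k+1-i) ^ n := by
    intro i hi
    rw [Finset.mem_range] at hi
    have hs := qnumN_sub hq1 (show i ≤ k+1 by omega)
    rw [pow_succ, hs]
    ring
  rw [Finset.sum_congr rfl split, Finset.sum_sub_distrib, ← Finset.mul_sum]
  have second : ∑ i ∈ Finset.range (k+2),
      (-1:ℝ)^i * q^(i.choose 2) * q^(k+1-i) * (qbinom q (k+1) i * qnumN q i)
        * qnumN q (k+1-i) ^ n
      = - (q^k * qnumN q (k+1) *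
          ∑ j ∈ Finset.range (k+1),
            (-1:ℝ)^j * q^(j.choose 2) * qbinom q k j * qnumN q (k-j) ^ n) := by
    rw [Finset.sum_range_succ']
    have h0 : (-1:ℝ)^0 * q^(Nat.choose 0 2) * q^(k+1-0) * (qbinom q (k+1) 0 * qnumN q 0)
        * qnumN q (k+1-0) ^ n = 0 := by
      rw [qnumN_zero]; ring
    rw [h0, add_zero, Finset.mul_sum, ← Finset.sum_neg_distrib]
    apply Finset.sum_congr rfl
    intro j hj
    rw [Finset.mem_range] at hj
    rw [qbinom_succ_mul hq0 hq1 k j]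
    have hch : (j+1).choose 2 = j.choose 2 + j := by
      rw [Nat.choose_succ_succ]
      simp [Nat.choose_one_right, Nat.add_comm]
    have he : k + 1 - (j+1) = k - j := Nat.succ_sub_succ k j
    have he3 : q^(j.choose 2 + j) * q^(k-j) = q^(j.choose 2) * q^k := by
      rw [← pow_add, ← pow_add]; congr 1; omega
    rw [hch, he, pow_succ (-1:ℝ) j]
    linear_combination (-(-1:ℝ)^j * qnumN q (k+1) * qbinom q k j * qnumN q (k-j)^n) * he3
  rw [second]
  ring
lemma qStirling_rec {q : ℝ} (hq0 : 0 < q) (hq1 : q < 1) (n k : ℕ) :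
    qStirling q (n+1) (k+1) = qStirling q n k + qnumN q (k+1) * qStirling q n (k+1) := by
  rw [qStirling_eq_T, qStirling_eq_T, qStirling_eq_T, Tq_rec hq0 hq1, qfac_succ]
  have hch : (k+1).choose 2 = k.choose 2 + k := by
    rw [Nat.choose_succ_succ]
    simp [Nat.choose_one_right, Nat.add_comm]
  rw [hch, pow_add]
  have h1 := qfac_ne hq0 hq1 k
  have h2 := qfac_ne hq0 hq1 (k+1)
  have h3 := (qnumN_pos hq0 hq1 k).ne'
  have h4 : q ≠ 0 := hq0.ne'
  field_simp
  ring
lemma qbinom_zero {q : ℝ} (hq0 : 0 < q) (hq1 : q < 1) : qbinom q 0 0 = 1 := by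
  unfold qbinom qfac
  simp
lemma qStirling_zero_zero {q : ℝ} (hq0 : 0 < q) (hq1 : q < 1) : qStirling q 0 0 = 1 := by
  rw [qStirling_eq_T]
  unfold Tq
  simp [qbinom_zero hq0 hq1, qfac]
lemma qStirling_succ_zero {q : ℝ} (n : ℕ) : qStirling q (n+1) 0 = 0 := by
  rw [qStirling_eq_T]
  unfold Tq
  simp [qnumN_zero]
lemma qStirling_eq_zero {q : ℝ} (hq0 : 0 < q) (hq1 : q < 1) :
    ∀ n k, n < k → qStirling q n k = 0 := by
  intro n
  induction n with
  | zero =>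
    intro k hk
    obtain ⟨K, rfl⟩ : ∃ K, k = K + 1 := ⟨k - 1, by omega⟩
    rw [qStirling_eq_T]
    have : Tq q 0 (K+1) = 0 := by
      unfold Tq
      rw [← gauss_sum hq0 hq1 K]
      apply Finset.sum_congr rfl
      intro i _
      rw [pow_zero, mul_one]
    rw [this, mul_zero]
  | succ n ih =>
    intro k hk
    obtain ⟨K, rfl⟩ : ∃ K, k = K + 1 := ⟨k - 1, by omega⟩
    rw [qStirling_rec hq0 hq1]
    rw [ih K (by omega), ih (K+1) (by omega)]
    ring
noncomputable def Fq (q x : ℝ) (l : ℕ) : ℝ :=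
  q ^ l.choose 2 * ∏ j ∈ Finset.range l, qnum q (x - (j:ℝ))
lemma Fq_eq {q : ℝ} (hq0 : 0 < q) (hq1 : q < 1) (x : ℝ) (l : ℕ) :
    Fq q x l = q ^ l.choose 2 * qbinomR q x l * qfac q l := by
  unfold Fq qbinomR
  rw [mul_assoc, div_mul_cancel₀ _ (qfac_ne hq0 hq1 l)]
lemma Fq_key {q : ℝ} (hq0 : 0 < q) (hq1 : q < 1) (x : ℝ) (l : ℕ) :
    qnum q x * Fq q x l = qnumN q l * Fq q x l + Fq q x (l+1) := by
  unfold Fq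
  rw [Finset.prod_range_succ]
  have hch : (l+1).choose 2 = l.choose 2 + l := by
    rw [Nat.choose_succ_succ]
    simp [Nat.choose_one_right, Nat.add_comm]
  rw [hch, pow_add]
  rw [qnum_split hq0 x l]
  ring
lemma one_var {q : ℝ} (hq0 : 0 < q) (hq1 : q < 1) (x : ℝ) (m : ℕ) :
    qnum q x ^ m = ∑ l ∈ Finset.range (m+1), Fq q x l * qStirling q m l := by
  induction m with
  | zero =>
    simp [Fq, qStirling_zero_zero hq0 hq1]
  | succ m ih =>
    have hpow : qnum q x ^ (m+1) = qnum q x * qnum q x ^ m := by ring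
    rw [hpow, ih, Finset.mul_sum]
    have step1 : ∀ l ∈ Finset.range (m+1),
        qnum q x * (Fq q x l * qStirling q m l)
        = qnumN q l * Fq q x l * qStirling q m l + Fq q x (l+1) * qStirling q m l := by
      intro l _
      rw [← mul_assoc, Fq_key hq0 hq1]
      ring
    rw [Finset.sum_congr rfl step1, Finset.sum_add_distrib]
    -- rewrite RHS
    conv_rhs => rw [Finset.sum_range_succ']
    have h0 : Fq q x 0 * qStirling q (m+1) 0 = 0 := by
      rw [qStirling_succ_zero]; ring
    rw [h0, add_zero]
    have step2 : ∀ l ∈ Finset.range (m+1),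
        Fq q x (l+1) * qStirling q (m+1) (l+1)
        = Fq q x (l+1) * qStirling q m l
          + qnumN q (l+1) * Fq q x (l+1) * qStirling q m (l+1) := by
      intro l _
      rw [qStirling_rec hq0 hq1]
      ring
    rw [Finset.sum_congr rfl step2, Finset.sum_add_distrib]
    have expand : ∑ l ∈ Finset.range (m+2), qnumN q l * Fq q x l * qStirling q m l
        = ∑ l ∈ Finset.range (m+1), qnumN q (l+1) * Fq q x (l+1) * qStirling q m (l+1) := by
      rw [Finset.sum_range_succ', qnumN_zero, zero_mul, zero_mul, add_zero]
    have e2 : ∑ l ∈ Finset.range (m+1), qnumN q l * Fq q x l * qStirling q m l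
        = ∑ l ∈ Finset.range (m+1), qnumN q (l+1) * Fq q x (l+1) * qStirling q m (l+1) := by
      rw [← expand]
      conv_rhs => rw [Finset.sum_range_succ]
      rw [qStirling_eq_zero hq0 hq1 m (m+1) (by omega), mul_zero, add_zero]
    rw [e2]
    ring

/-- Multivariate expansion of `(∏ᵢ [xᵢ]_q)^m` in terms of Gaussian binomial
coefficients and the `q`-extension of the second kind Stirling numbers. -/
theorem qnum_prod_pow_eq_sum_qStirling
    (q : ℝ) (hq0 : 0 < q) (hq1 : q < 1)
    (w : ℕ) (hw : 1 ≤ w) (m : ℕ) (x : Fin w → ℝ) :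
    (∏ i, qnum q (x i)) ^ m =
      ∑ l ∈ Finset.Icc (0 : Fin w → ℕ) (fun _ => m),
        q ^ (∑ i, (l i).choose 2) *
          ∏ i, qbinomR q (x i) (l i) * qfac q (l i) * qStirling q m (l i) := by
  have hIcc : Finset.Icc (0 : Fin w → ℕ) (fun _ => m)
      = Fintype.piFinset (fun _ : Fin w => Finset.range (m+1)) := by
    ext l
    simp [Finset.mem_Icc, Fintype.mem_piFinset, Nat.lt_succ_iff, Pi.le_def]
  rw [hIcc, ← Finset.prod_pow]
  have h1 : ∀ i : Fin w, qnum q (x i) ^ m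
      = ∑ l ∈ Finset.range (m+1), Fq q (x i) l * qStirling q m l :=
    fun i => one_var hq0 hq1 (x i) m
  rw [Finset.prod_congr rfl (fun i _ => h1 i)]
  rw [Finset.prod_univ_sum]
  apply Finset.sum_congr rfl
  intro l _
  have h2 : ∀ i : Fin w, Fq q (x i) (l i) * qStirling q m (l i)
      = q ^ (l i).choose 2 * (qbinomR q (x i) (l i) * qfac q (l i) * qStirling q m (l i)) := by
    intro i
    rw [Fq_eq hq0 hq1]
    ring
  rw [Finset.prod_congr rfl (fun i _ => h2 i), Finset.prod_mul_distrib,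
    Finset.prod_pow_eq_pow_sum]
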